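/- Let f : ℝ^n → ℝ^{n-k} and N : ℝ^n → ℝ^{n×(n-k)} be continuously differentiable, h(z) = N(z) f(z), and let z₀ satisfy f(z₀) = 0. Then the characteristic polynomial of the n×n Jacobian Dh(z₀) equals X^k times the characteristic polynomial of the (n-k)×(n-k) matrix Df(z₀)·N(z₀). Consequently, the eigenvalues of Dh(z₀) consist of (at least) k zero eigenvalues together with the eigenvalues of Df(z₀)·N(z₀), so the nontrivial eigenvalues of the layer problem along the critical manifold are equal as a set to the eigenvalues of Df·N. -/

import Mathlib

open Polynomial Matrix

lemma my_reflect_inj {R : Type*} [Semiring R] (Nn : ℕ) {p q : R[X]}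
    (h : reflect Nn p = reflect Nn q) : p = q := by
  ext i
  have := congrArg (fun r => coeff r (revAt Nn i)) h
  simpa using this

lemma my_charpolyRev_mul_comm {m n : ℕ} (A : Matrix (Fin n) (Fin m) ℝ)
    (B : Matrix (Fin m) (Fin n) ℝ) :
    (A * B).charpolyRev = (B * A).charpolyRev := by
  unfold Matrix.charpolyRev
  rw [Matrix.map_mul, Matrix.map_mul]
  have h1 : (1 : Matrix (Fin n) (Fin n) ℝ[X]) - (X : ℝ[X]) • (A.map C * B.map C)
      = 1 + (-((X : ℝ[X]) • A.map C)) * B.map C := by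
    rw [Matrix.neg_mul, Matrix.smul_mul, sub_eq_add_neg]
  have h2 : (1 : Matrix (Fin m) (Fin m) ℝ[X]) - (X : ℝ[X]) • (B.map C * A.map C)
      = 1 + B.map C * (-((X : ℝ[X]) • A.map C)) := by
    rw [Matrix.mul_neg, Matrix.mul_smul, sub_eq_add_neg]
  rw [h1, h2, Matrix.det_one_add_mul_comm]

lemma my_charpoly_mul_comm {m n : ℕ} (h : m ≤ n) (A : Matrix (Fin n) (Fin m) ℝ)
    (B : Matrix (Fin m) (Fin n) ℝ) :
    (A * B).charpoly = X ^ (n - m) * (B * A).charpoly := by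
  have hdp : (A * B).charpoly.natDegree = n := by
    simpa using Matrix.charpoly_natDegree_eq_dim (A * B)
  have hdq : (B * A).charpoly.natDegree = m := by
    simpa using Matrix.charpoly_natDegree_eq_dim (B * A)
  apply my_reflect_inj n
  have hrefl : reflect n (X ^ (n - m) * (B * A).charpoly)
      = reflect m ((B * A).charpoly) := by
    have := reflect_mul (X ^ (n - m) : ℝ[X]) (B * A).charpoly
      (natDegree_X_pow_le (n - m)) (le_of_eq hdq)
    rw [Nat.sub_add_cancel h] at this
    rw [this, reflect_monomial, revAt_le (le_refl (n - m)), Nat.sub_self, pow_zero, one_mul]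
  rw [hrefl]
  have h1 : reflect n (A * B).charpoly = (A * B).charpoly.reverse := by
    rw [Polynomial.reverse, hdp]
  have h2 : reflect m (B * A).charpoly = (B * A).charpoly.reverse := by
    rw [Polynomial.reverse, hdq]
  rw [h1, h2, Matrix.reverse_charpoly, Matrix.reverse_charpoly,
    my_charpolyRev_mul_comm]

/-- For the layer problem h(z) = N(z) f(z) with z₀ on the critical
manifold, the characteristic polynomial of the n×n Jacobian Dh(z₀) equals
X^k times the characteristic polynomial of the (n−k)×(n−k) matrix Df(z₀)·N(z₀).
Consequently the eigenvalues of Dh(z₀) consist of (at least) k zeros together with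
the eigenvalues of Df(z₀)·N(z₀): every nonzero μ is a root of one characteristic
polynomial iff it is a root of the other. -/
theorem charpoly_layer_jacobian {n k : ℕ} (hk : k ≤ n)
    (f : (Fin n → ℝ) → (Fin (n - k) → ℝ))
    (N : (Fin n → ℝ) → Matrix (Fin n) (Fin (n - k)) ℝ)
    (hf : ContDiff ℝ 1 f)
    (hN : ∀ i j, ContDiff ℝ 1 fun z => N z i j)
    (z₀ : Fin n → ℝ) (hz₀ : f z₀ = 0) :
    (LinearMap.toMatrix' (fderiv ℝ (fun z => (N z).mulVec (f z)) z₀).toLinearMap).charpoly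
        = Polynomial.X ^ k
          * ((LinearMap.toMatrix' (fderiv ℝ f z₀).toLinearMap) * N z₀).charpoly ∧
      ∀ μ : ℝ, μ ≠ 0 →
        ((LinearMap.toMatrix'
            (fderiv ℝ (fun z => (N z).mulVec (f z)) z₀).toLinearMap).charpoly.IsRoot μ ↔
          ((LinearMap.toMatrix' (fderiv ℝ f z₀).toLinearMap) * N z₀).charpoly.IsRoot μ) := by
  set Df := fderiv ℝ f z₀ with hDf
  have hf' : HasFDerivAt f Df z₀ := (hf.differentiable one_ne_zero z₀).hasFDerivAt
  set G : (Fin n → ℝ) →L[ℝ] (Fin n → ℝ) :=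
    (LinearMap.toContinuousLinearMap ((N z₀).mulVecLin)).comp Df with hG
  have hcomp : HasFDerivAt (fun z => (N z).mulVec (f z)) G z₀ := by
    apply hasFDerivAt_pi''
    intro i
    have hj : ∀ j, HasFDerivAt (fun z => N z i j * f z j)
        (N z₀ i j • ((ContinuousLinearMap.proj j).comp Df)) z₀ := by
      intro j
      have hdj : HasFDerivAt (fun z => f z j)
          ((ContinuousLinearMap.proj j).comp Df) z₀ := hasFDerivAt_pi'.1 hf' j
      have hNij : HasFDerivAt (fun z => N z i j)
          (fderiv ℝ (fun z => N z i j) z₀) z₀ :=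
        ((hN i j).differentiable one_ne_zero z₀).hasFDerivAt
      have := hNij.mul hdj
      have hz : f z₀ j = 0 := by rw [hz₀]; rfl
      simp [hz] at this; exact this
    have hsum := HasFDerivAt.sum (fun j (_ : j ∈ Finset.univ) => hj j)
    have heq1 : (fun z => (N z).mulVec (f z) i)
        = fun z => ∑ j, N z i j * f z j := by
      funext z; simp [Matrix.mulVec, dotProduct]
    rw [heq1]
    convert hsum using 1
    all_goals (ext v; simp [hG, Matrix.mulVec, dotProduct, Finset.sum_apply])
  have hfd : fderiv ℝ (fun z => (N z).mulVec (f z)) z₀ = G := hcomp.fderiv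
  have hmat : LinearMap.toMatrix'
      (fderiv ℝ (fun z => (N z).mulVec (f z)) z₀).toLinearMap
      = N z₀ * LinearMap.toMatrix' Df.toLinearMap := by
    rw [hfd, hG]
    rw [ContinuousLinearMap.toLinearMap_comp, LinearMap.toMatrix'_comp]
    congr 1
    ext i j
    simp [LinearMap.toMatrix'_apply, Matrix.mulVec, dotProduct,
      Pi.single_apply]
  have hmain : (LinearMap.toMatrix'
      (fderiv ℝ (fun z => (N z).mulVec (f z)) z₀).toLinearMap).charpoly
      = Polynomial.X ^ k
        * ((LinearMap.toMatrix' Df.toLinearMap) * N z₀).charpoly := by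
    rw [hmat, my_charpoly_mul_comm (Nat.sub_le n k) (N z₀)
      (LinearMap.toMatrix' Df.toLinearMap), Nat.sub_sub_self hk]
  refine ⟨hmain, fun μ hμ => ?_⟩
  rw [hmain]
  simp [Polynomial.IsRoot, pow_ne_zero _ hμ, hμ]
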